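/- Let (T_n) be a Markovian tree growth process on recursive trees whose conditional distribution of the full history given the final tree T_n is well-defined. If the process is shape exchangeable—i.e., P(T_n = t) = P(T_n = t') whenever recursive trees t and t' are isomorphic as unlabeled trees—then for any recursive tree t_n with positive probability, the conditional distribution of the history (T_1, ..., T_{n-1}) given T_n = t_n is uniform over the set of all histories compatible with t_n, each having probability 1/#hist(t_n) where #hist(t_n) is the number of orderings of the vertices of t_n such that every prefix induces a connected subgraph. -/

import Mathlib

open scoped Classical
open SimpleGraph Finset

/-- A recursive tree on `Fin n`: a tree such that the nodes `{0, ..., k-1}` induce a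
connected subgraph for every `k ≥ 1`. Node `0` is the root (first arrival). -/
def IsRecursive (n : ℕ) (G : SimpleGraph (Fin n)) : Prop :=
  G.IsTree ∧ ∀ k : ℕ, 1 ≤ k → (G.induce {i : Fin n | i.val < k}).Connected

/-- A history of the labeled tree `t`: a pair of a recursive tree `G` together with an
isomorphism (relabeling) carrying `G` onto `t`. -/
def Histories (n : ℕ) (t : SimpleGraph (Fin n)) : Type :=
  {p : Σ G : SimpleGraph (Fin n), G ≃g t // IsRecursive n p.1}

instance histFinite (n : ℕ) (t : SimpleGraph (Fin n)) : Finite (Histories n t) := by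
  have : ∀ G : SimpleGraph (Fin n), Finite (G ≃g t) := fun G =>
    Finite.of_injective (fun e => (e : Fin n ≃ Fin n)) fun a b hab => by
      cases a; cases b; simp only [RelIso.mk.injEq]; exact hab
  unfold Histories
  infer_instance

theorem stmt3 (n : ℕ) (hn : 1 ≤ n) (P : SimpleGraph (Fin n) → ℝ)
    (hP0 : ∀ G, 0 ≤ P G)
    (hexch : ∀ G G' : SimpleGraph (Fin n), IsRecursive n G → IsRecursive n G' →
      Nonempty (G ≃g G') → P G = P G')
    (t : SimpleGraph (Fin n)) (h : Histories n t)
    (htot : 0 < ∑ᶠ h' : Histories n t, P h'.1.1) :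
    (P h.1.1 / (Nat.factorial n : ℝ)) /
        (∑ᶠ h' : Histories n t, P h'.1.1 / (Nat.factorial n : ℝ)) =
      1 / (Nat.card (Histories n t) : ℝ) := by
  haveI : Fintype (Histories n t) := Fintype.ofFinite _
  have hconst : ∀ h' : Histories n t, P h'.1.1 = P h.1.1 := fun h' =>
    hexch _ _ h'.2 h.2 ⟨h'.1.2.trans h.1.2.symm⟩
  set c := P h.1.1 with hc
  have hsum : (∑ᶠ h' : Histories n t, P h'.1.1) = (Nat.card (Histories n t) : ℝ) * c := by
    rw [finsum_eq_sum_of_fintype]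
    rw [Finset.sum_congr rfl (fun h' _ => hconst h'), Finset.sum_const]
    simp [Nat.card_eq_fintype_card, mul_comm]
  have hsum2 : (∑ᶠ h' : Histories n t, P h'.1.1 / (Nat.factorial n : ℝ))
      = (∑ᶠ h' : Histories n t, P h'.1.1) / (Nat.factorial n : ℝ) := by
    rw [finsum_eq_sum_of_fintype, finsum_eq_sum_of_fintype, Finset.sum_div]
  rw [hsum2, hsum]
  have hcpos : 0 < c := by
    rw [hsum] at htot
    by_contra hcle
    push_neg at hcle
    have : (Nat.card (Histories n t) : ℝ) * c ≤ 0 :=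
      mul_nonpos_of_nonneg_of_nonpos (by positivity) hcle
    linarith
  have hcard : (0 : ℝ) < (Nat.card (Histories n t) : ℝ) := by
    rw [hsum] at htot
    nlinarith
  have hfac : (0 : ℝ) < (Nat.factorial n : ℝ) := by
    exact_mod_cast Nat.factorial_pos n
  have hcard' : (0 : ℝ) < (Fintype.card (Histories n t) : ℝ) := by
    rwa [Nat.card_eq_fintype_card] at hcard
  field_simp
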